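/- Let M be a countable structure in a finite relational language. If M is finitely partitioned, then M has exactly one sibling: every countable structure that is bi-embeddable with M is isomorphic to M. -/
import Mathlib


/- STATEMENT 0: If a countable structure `M` in a finite relational language is finitely
partitioned, then every countable structure bi-embeddable with `M` is isomorphic to `M`. -/

open FirstOrder Language Set

universe u v w

namespace Stmt0

variable (L : FirstOrder.Language.{v, w})

/-- `M` is finitely partitioned: the universe admits a finite partition such that every
bijection of `M` fixing each piece setwise is an automorphism of `M`. -/
def IsFinitelyPartitioned (M : Type u) [L.Structure M] : Prop :=
  ∃ (n : ℕ) (C : Fin n → Set M),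
    (∀ x : M, ∃! i, x ∈ C i) ∧
      ∀ σ : Equiv.Perm M, (∀ i, σ '' C i = C i) →
        ∀ (m : ℕ) (R : L.Relations m) (v : Fin m → M),
          Structure.RelMap R (σ ∘ v) ↔ Structure.RelMap R v

section Aux

variable {M : Type u} [L.Structure M] [DecidableEq M]

/-- Swap-equivalence: the transposition of `x` and `y` is an automorphism. -/
def SwapEq (x y : M) : Prop :=
  ∀ (m : ℕ) (R : L.Relations m) (v : Fin m → M),
    Structure.RelMap R (Equiv.swap x y ∘ v) ↔ Structure.RelMap R v

variable {L}

lemma swapEq_refl (x : M) : SwapEq L x x := by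
  intro m R v
  simp [Equiv.swap_self]

lemma swapEq_symm {x y : M} (h : SwapEq L x y) : SwapEq L y x := by
  intro m R v
  rw [Equiv.swap_comm]
  exact h m R v

lemma swapEq_trans {x y z : M} (hxy : SwapEq L x y) (hyz : SwapEq L y z) :
    SwapEq L x z := by
  rcases eq_or_ne x y with rfl | hxyne
  · exact hyz
  rcases eq_or_ne y z with rfl | hyzne
  · exact hxy
  rcases eq_or_ne x z with rfl | hxzne
  · exact swapEq_refl x
  have hswap : (Equiv.swap x z : M → M)
      = (Equiv.swap x y : M → M) ∘ (Equiv.swap y z : M → M) ∘ (Equiv.swap x y : M → M) := by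
    funext a
    simp only [Function.comp_apply, Equiv.swap_apply_def]
    split_ifs <;> simp_all
  intro m R v
  rw [hswap]
  have hassoc : ((Equiv.swap x y : M → M) ∘ (Equiv.swap y z : M → M)
      ∘ (Equiv.swap x y : M → M)) ∘ v
      = (Equiv.swap x y : M → M) ∘ ((Equiv.swap y z : M → M)
        ∘ ((Equiv.swap x y : M → M) ∘ v)) := rfl
  rw [hassoc]
  exact ((hxy _ R _).trans (hyz _ R _)).trans (hxy _ R v)

/-- The key "canonicity" lemma: the truth of a relation only depends on the
swap-equivalence classes and the equality pattern of the tuple. -/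
lemma relMap_congr {m : ℕ} (R : L.Relations m) (v w : Fin m → M)
    (h1 : ∀ k, SwapEq L (v k) (w k))
    (h2 : ∀ k l, v k = v l ↔ w k = w l) :
    Structure.RelMap R v ↔ Structure.RelMap R w := by
  suffices H : ∀ (d : ℕ) (v : Fin m → M),
      (∀ k, SwapEq L (v k) (w k)) → (∀ k l, v k = v l ↔ w k = w l) →
      (Finset.univ.filter fun k => v k ≠ w k).card ≤ d →
      (Structure.RelMap R v ↔ Structure.RelMap R w) by
    exact H _ v h1 h2 le_rfl
  intro d
  induction d with
  | zero =>
    intro v h1 h2 hc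
    have : v = w := by
      funext k
      by_contra hk
      have hmem : k ∈ Finset.univ.filter fun k => v k ≠ w k := by
        simp [hk]
      have := Finset.card_pos.mpr ⟨k, hmem⟩
      omega
    rw [this]
  | succ d ih =>
    intro v h1 h2 hc
    by_cases hvw : v = w
    · rw [hvw]
    obtain ⟨k₀, hk₀⟩ : ∃ k, v k ≠ w k := by
      by_contra hcon
      push_neg at hcon
      exact hvw (funext hcon)
    set s : M → M := (Equiv.swap (v k₀) (w k₀) : M → M) with hs
    set v' : Fin m → M := s ∘ v with hv'
    have hstep : Structure.RelMap R v' ↔ Structure.RelMap R v := h1 k₀ m R v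
    -- compute values of v'
    have hv'val : ∀ k, (v k = v k₀ → v' k = w k) ∧ (v k = w k₀ → v' k = v k₀) ∧
        (v k ≠ v k₀ → v k ≠ w k₀ → v' k = v k) := by
      intro k
      refine ⟨?_, ?_, ?_⟩
      · intro hk
        have : w k = w k₀ := (h2 k k₀).mp hk
        simp [hv', hs, Function.comp, hk, this]
      · intro hk
        simp [hv', hs, Function.comp, hk]
      · intro hk1 hk2
        simp [hv', hs, Function.comp, Equiv.swap_apply_of_ne_of_ne hk1 hk2]
    have h1' : ∀ k, SwapEq L (v' k) (w k) := by
      intro k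
      rcases eq_or_ne (v k) (v k₀) with hk | hk
      · rw [(hv'val k).1 hk]
        exact swapEq_refl _
      rcases eq_or_ne (v k) (w k₀) with hk2 | hk2
      · rw [(hv'val k).2.1 hk2]
        -- SwapEq (v k₀) (w k): v k₀ ≈ w k₀ = v k ≈ w k
        have a1 : SwapEq L (v k₀) (w k₀) := h1 k₀
        have a2 : SwapEq L (w k₀) (w k) := by rw [← hk2]; exact h1 k
        exact swapEq_trans a1 a2
      · rw [(hv'val k).2.2 hk hk2]
        exact h1 k
    have h2' : ∀ k l, v' k = v' l ↔ w k = w l := by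
      intro k l
      have : v' k = v' l ↔ v k = v l := by
        constructor
        · intro hkl
          have := (Equiv.swap (v k₀) (w k₀)).injective hkl
          exact this
        · intro hkl
          simp [hv', Function.comp, hkl]
      rw [this]
      exact h2 k l
    have hsub : (Finset.univ.filter fun k => v' k ≠ w k)
        ⊆ (Finset.univ.filter fun k => v k ≠ w k).erase k₀ := by
      intro k hk
      simp only [Finset.mem_filter, Finset.mem_univ, true_and] at hk
      rcases eq_or_ne (v k) (v k₀) with hkk | hkk
      · exact absurd ((hv'val k).1 hkk) hk
      have hvk : v k ≠ w k := by
        intro heq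
        rcases eq_or_ne (v k) (w k₀) with h3 | h3
        · -- v k = w k₀ : then w k = w k₀ so v k = v k₀, contra
          have : w k = w k₀ := heq ▸ h3
          exact hkk ((h2 k k₀).mpr this)
        · exact hk (((hv'val k).2.2 hkk h3).trans heq)
      refine Finset.mem_erase.mpr ⟨?_, by simp [hvk]⟩
      intro hkeq
      exact hkk (by rw [hkeq])
    have hcard : (Finset.univ.filter fun k => v' k ≠ w k).card ≤ d := by
      have h1c := Finset.card_le_card hsub
      have hk₀mem : k₀ ∈ Finset.univ.filter fun k => v k ≠ w k := by simp [hk₀]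
      have h2c := Finset.card_erase_of_mem hk₀mem
      omega
    exact hstep.symm.trans (ih v' h1' h2' hcard)

/-- Swap-equivalence pulls back along self-embeddings. -/
lemma swapEq_pullback (h : M ↪[L] M) {x y : M}
    (hxy : SwapEq L (h x) (h y)) : SwapEq L x y := by
  have hcomm : (h : M → M) ∘ (Equiv.swap x y : M → M)
      = (Equiv.swap (h x) (h y) : M → M) ∘ (h : M → M) := by
    funext z
    rcases eq_or_ne z x with rfl | hzx
    · simp
    rcases eq_or_ne z y with rfl | hzy
    · simp
    simp [Equiv.swap_apply_of_ne_of_ne hzx hzy,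
      Equiv.swap_apply_of_ne_of_ne (h.injective.ne hzx) (h.injective.ne hzy)]
  intro m R v
  have e1 : Structure.RelMap R ((Equiv.swap x y : M → M) ∘ v)
      ↔ Structure.RelMap R ((h : M → M) ∘ ((Equiv.swap x y : M → M) ∘ v)) :=
    (h.map_rel R _).symm
  have e2 : (h : M → M) ∘ ((Equiv.swap x y : M → M) ∘ v)
      = (Equiv.swap (h x) (h y) : M → M) ∘ ((h : M → M) ∘ v) := by
    rw [← Function.comp_assoc, hcomm, Function.comp_assoc]
  rw [e1, e2]
  exact (hxy m R _).trans (h.map_rel R v)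

end Aux

/-- A countable finitely partitioned structure in a finite relational language has exactly
one sibling: every countable structure bi-embeddable with it is isomorphic to it. -/
theorem finitelyPartitioned_unique_sibling
    [L.IsRelational] [Finite (Σ n, L.Relations n)]
    (M : Type u) [L.Structure M] [Countable M]
    (hM : IsFinitelyPartitioned L M) :
    ∀ (N : Type u) [L.Structure N] [Countable N],
      Nonempty (M ↪[L] N) → Nonempty (N ↪[L] M) → Nonempty (M ≃[L] N) := by
  intro N _ _ hMN hNM
  obtain ⟨f⟩ := hMN
  obtain ⟨g⟩ := hNM
  letI : DecidableEq M := Classical.decEq M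
  obtain ⟨n, C, hpart, hauto⟩ := hM
  -- the setoid of swap-equivalence
  let SE : Setoid M := ⟨fun x y => SwapEq L x y,
    ⟨fun x => swapEq_refl x, fun h => swapEq_symm h, fun h h' => swapEq_trans h h'⟩⟩
  let Q := Quotient SE
  let q : M → Q := Quotient.mk SE
  have hqeq : ∀ {x y : M}, q x = q y → SwapEq L x y := fun h => Quotient.exact h
  have hqmk : ∀ {x y : M}, SwapEq L x y → q x = q y := fun h => Quotient.sound h
  -- the class map from the given partition
  have hcl : ∀ x : M, ∃ i, x ∈ C i := fun x => (hpart x).exists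
  let cl : M → Fin n := fun x => (hcl x).choose
  have hclmem : ∀ x : M, x ∈ C (cl x) := fun x => (hcl x).choose_spec
  have hcluniq : ∀ (x : M) (i : Fin n), x ∈ C i → i = cl x := by
    intro x i hi
    obtain ⟨j, hj, hu⟩ := hpart x
    rw [hu i hi, hu (cl x) (hclmem x)]
  -- same class implies swap-equivalent
  have hclswap : ∀ x y : M, cl x = cl y → SwapEq L x y := by
    intro x y hxy
    have himg : ∀ i, (Equiv.swap x y : M → M) '' C i = C i := by
      intro i
      have key : ∀ z ∈ C i, (Equiv.swap x y : M → M) z ∈ C i := by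
        intro z hz
        rcases eq_or_ne z x with rfl | hzx
        · rw [Equiv.swap_apply_left]
          have : i = cl z := hcluniq z i hz
          rw [this, hxy]
          exact hclmem y
        rcases eq_or_ne z y with rfl | hzy
        · rw [Equiv.swap_apply_right]
          have : i = cl z := hcluniq z i hz
          rw [this, ← hxy]
          exact hclmem x
        · rw [Equiv.swap_apply_of_ne_of_ne hzx hzy]
          exact hz
      apply Set.Subset.antisymm
      · rintro _ ⟨a, ha, rfl⟩
        exact key a ha
      · intro z hz
        refine ⟨(Equiv.swap x y : M → M) z, key z hz, ?_⟩
        simp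
    exact fun m R v => hauto (Equiv.swap x y) himg m R v
  -- Q is finite
  have hQfin : Finite Q := by
    apply Finite.of_injective (fun c : Q => cl c.out)
    intro c c' hcc
    have : SwapEq L c.out c'.out := hclswap _ _ hcc
    have h2 : q c.out = q c'.out := hqmk this
    rw [← Quotient.out_eq c, ← Quotient.out_eq c']
    exact h2
  -- the self-embedding
  let h : M ↪[L] M := g.comp f
  have hback : ∀ x y : M, q (h x) = q (h y) → q x = q y := by
    intro x y hxy
    exact hqmk (swapEq_pullback h (hqeq hxy))
  -- the induced map on classes
  let Φ : Q → Q := fun c => q (h c.out)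
  have hΦinj : Function.Injective Φ := by
    intro c c' hcc
    have h2 := hback _ _ hcc
    rw [← Quotient.out_eq c, ← Quotient.out_eq c']
    exact h2
  have hΦsurj : Function.Surjective Φ := Finite.surjective_of_injective hΦinj
  have hΦq : ∀ x : M, Φ (q x) = q (h x) := by
    intro x
    obtain ⟨c, hc⟩ := hΦsurj (q (h x))
    have h2 : q c.out = q x := hback _ _ hc
    have h3 : c = q x := by rw [← Quotient.out_eq c]; exact h2
    rw [← h3]
    exact hc
  -- cardinal bookkeeping
  let E : Q → Type u := fun c => { x : M // q x = c }
  let D : Q → Type u := fun c => { x : M // x ∈ Set.range (g : N → M) ∧ q x = c }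
  have hDE : ∀ c, Cardinal.mk (D c) ≤ Cardinal.mk (E c) := by
    intro c
    refine Cardinal.mk_le_of_injective (f := fun x : D c => (⟨x.val, x.prop.2⟩ : E c)) ?_
    intro a b hab
    have hv := congrArg Subtype.val hab
    exact Subtype.ext hv
  have hstep : ∀ c, Cardinal.mk (E c) ≤ Cardinal.mk (D (Φ c)) := by
    intro c
    refine Cardinal.mk_le_of_injective (f := fun x : E c =>
      (⟨h x.val, ⟨f x.val, rfl⟩, by rw [← hΦq, x.prop]⟩ : D (Φ c))) ?_
    intro a b hab
    have hv := congrArg Subtype.val hab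
    exact Subtype.ext (h.injective hv)
  let Φe : Equiv.Perm Q := Equiv.ofBijective Φ ⟨hΦinj, hΦsurj⟩
  have hΦe : ∀ c, Φe c = Φ c := fun _ => rfl
  have hiter : ∀ (k : ℕ) (c : Q), Cardinal.mk (E c) ≤ Cardinal.mk (E ((Φe ^ k) c)) := by
    intro k
    induction k with
    | zero => intro c; simp
    | succ k ih =>
      intro c
      have e1 : (Φe ^ (k + 1)) c = Φe ((Φe ^ k) c) := by
        rw [pow_succ']
        rfl
      rw [e1, hΦe]
      exact le_trans (ih c) (le_trans (hstep _) (hDE _))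
  have hEΦ : ∀ c, Cardinal.mk (E (Φ c)) ≤ Cardinal.mk (E c) := by
    intro c
    have hmpos : 0 < orderOf Φe := orderOf_pos Φe
    have h1 : Cardinal.mk (E (Φ c)) ≤ Cardinal.mk (E ((Φe ^ (orderOf Φe - 1)) (Φ c))) :=
      hiter _ _
    have h2 : (Φe ^ (orderOf Φe - 1)) (Φ c) = c := by
      have : (Φe ^ (orderOf Φe - 1)) (Φe c) = (Φe ^ (orderOf Φe - 1) * Φe) c := rfl
      rw [← hΦe, this, ← pow_succ, Nat.sub_add_cancel hmpos, pow_orderOf_eq_one]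
      rfl
    rwa [h2] at h1
  have hcard : ∀ c, Cardinal.mk (D c) = Cardinal.mk (E c) := by
    intro c
    obtain ⟨c', rfl⟩ := hΦsurj c
    refine le_antisymm (hDE _) ?_
    exact le_trans (hEΦ c') (hstep c')
  -- choose class-wise bijections
  have hne : ∀ c, Nonempty (E c ≃ D c) :=
    fun c => Cardinal.eq.mp (hcard c).symm
  let ε : ∀ c, E c ≃ D c := fun c => (hne c).some
  -- the corrected bijection
  let t : ∀ x : M, D (q x) := fun x => ε (q x) ⟨x, rfl⟩
  have htq : ∀ x : M, q (t x).val = q x := fun x => (t x).prop.2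
  have htval : ∀ (x : M) (c : Q) (hc : q x = c), (t x).val = (ε c ⟨x, hc⟩).val := by
    intro x c hc
    cases hc
    rfl
  have htrange : ∀ x : M, (t x).val ∈ Set.range (g : N → M) := fun x => (t x).prop.1
  let F : M → N := fun x => (htrange x).choose
  have hgF : ∀ x : M, g (F x) = (t x).val := fun x => (htrange x).choose_spec
  have hFinj : Function.Injective F := by
    intro x x' hxx
    have hval : (t x).val = (t x').val := by
      rw [← hgF, ← hgF, hxx]
    have hq2 : q x = q x' := by rw [← htq x, ← htq x', hval]
    have e1 : (t x).val = (ε (q x') ⟨x, hq2⟩).val := htval x (q x') hq2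
    have e2 : (t x').val = (ε (q x') ⟨x', rfl⟩).val := htval x' (q x') rfl
    have : (ε (q x') ⟨x, hq2⟩ : D (q x')) = ε (q x') ⟨x', rfl⟩ := by
      apply Subtype.ext
      rw [← e1, ← e2, hval]
    have := (ε (q x')).injective this
    exact congrArg Subtype.val this
  have hFsurj : Function.Surjective F := by
    intro y
    let c : Q := q (g y)
    let d : D c := ⟨g y, ⟨y, rfl⟩, rfl⟩
    let a : E c := (ε c).symm d
    refine ⟨a.val, ?_⟩
    apply g.injective
    rw [hgF]
    have e1 : (t a.val).val = (ε c ⟨a.val, a.prop⟩).val := htval a.val c a.prop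
    have e2 : (⟨a.val, a.prop⟩ : E c) = a := rfl
    rw [e1, e2, (ε c).apply_symm_apply]
  have hFrel : ∀ (m : ℕ) (R : L.Relations m) (v : Fin m → M),
      Structure.RelMap R (F ∘ v) ↔ Structure.RelMap R v := by
    intro m R v
    have e1 : Structure.RelMap R (F ∘ v)
        ↔ Structure.RelMap R ((g : N → M) ∘ (F ∘ v)) := (g.map_rel R _).symm
    rw [e1]
    have e2 : (g : N → M) ∘ (F ∘ v) = fun k => (t (v k)).val := by
      funext k
      exact hgF (v k)
    rw [e2]
    apply relMap_congr
    · intro k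
      exact hqeq (htq (v k))
    · intro k l
      constructor
      · intro hkl
        have hq2 : q (v k) = q (v l) := by rw [← htq (v k), ← htq (v l), hkl]
        have e3 : (t (v k)).val = (ε (q (v l)) ⟨v k, hq2⟩).val := htval _ _ hq2
        have e4 : (t (v l)).val = (ε (q (v l)) ⟨v l, rfl⟩).val := htval _ _ rfl
        have : (ε (q (v l)) ⟨v k, hq2⟩ : D (q (v l))) = ε (q (v l)) ⟨v l, rfl⟩ := by
          apply Subtype.ext
          rw [← e3, ← e4, hkl]
        have := (ε (q (v l))).injective this
        exact congrArg Subtype.val this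
      · intro hkl
        rw [hkl]
  refine ⟨⟨Equiv.ofBijective F ⟨hFinj, hFsurj⟩, ?_, ?_⟩⟩
  · intro k fn x
    exact isEmptyElim fn
  · intro m R x
    exact hFrel m R x
end Stmt0
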